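/- Let c > 0 be fixed and define F(d,c) = (1 − d/2) + √((1 − d/2)² + c) and G(d,c) = −d + √(d² + 2c). Then d² · (F(d,c) − G(d,c)) → 2c as the real parameter d → ∞; equivalently, the difference between the two greedy merge-time proposals Δ_{k,C} − Δ^{prev}_{k,C} = (F(d,c) − G(d,c))/2 decays as c/d² + O(d^{-3}). (Lemma 1, part 3: the discrepancy between the proposals decreases at rate d^{-2} with constant proportional to λε_{k−1,C}.) -/

import Mathlib

open Real Filter

/-- The corrected greedy merge-time proposal numerator. -/
noncomputable def F (d c : ℝ) : ℝ := (1 - d / 2) + Real.sqrt ((1 - d / 2) ^ 2 + c)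

/-- The greedy merge-time proposal of Teh et al. -/
noncomputable def G (d c : ℝ) : ℝ := -d + Real.sqrt (d ^ 2 + 2 * c)

/-- Lemma 1, part 3: `d² (F(d,c) − G(d,c)) → 2c` as `d → ∞`, i.e. the discrepancy
between the two greedy merge-time proposals decays as `c / d² + O(d⁻³)`. -/
theorem diff_decay (c : ℝ) (hc : 0 < c) :
    Tendsto (fun d : ℝ => d ^ 2 * (F d c - G d c)) atTop (nhds (2 * c)) := by
  have hw : Tendsto (fun d : ℝ => 1 / d) atTop (nhds 0) := by
    simpa using (tendsto_inv_atTop_zero : Tendsto (fun r : ℝ => r⁻¹) atTop (nhds 0))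
  have hu : Tendsto (fun d : ℝ => Real.sqrt ((1 - d / 2) ^ 2 + c) / d) atTop (nhds (1 / 2)) := by
    have hcont : Tendsto (fun t : ℝ => Real.sqrt ((t - 1 / 2) ^ 2 + c * t ^ 2)) (nhds 0)
        (nhds (1 / 2)) := by
      have hC : Continuous (fun t : ℝ => Real.sqrt ((t - 1 / 2) ^ 2 + c * t ^ 2)) := by
        continuity
      have h := hC.tendsto 0
      have he : Real.sqrt ((0 - 1 / 2) ^ 2 + c * 0 ^ 2) = 1 / 2 := by
        rw [show ((0:ℝ) - 1/2)^2 + c * 0 ^ 2 = (1/2)^2 by ring, Real.sqrt_sq (by norm_num)]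
      rwa [he] at h
    apply (hcont.comp hw).congr'
    filter_upwards [eventually_gt_atTop (0 : ℝ)] with d hd
    simp only [Function.comp_apply]
    rw [show (1/d - 1/2)^2 + c * (1/d)^2 = ((1 - d/2)^2 + c) / d^2 by field_simp,
      Real.sqrt_div' _ (by positivity), Real.sqrt_sq hd.le]
  have hv : Tendsto (fun d : ℝ => Real.sqrt (d ^ 2 + 2 * c) / d) atTop (nhds 1) := by
    have hcont : Tendsto (fun t : ℝ => Real.sqrt (1 + 2 * c * t ^ 2)) (nhds 0) (nhds 1) := by
      have hC : Continuous (fun t : ℝ => Real.sqrt (1 + 2 * c * t ^ 2)) := by continuity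
      have h := hC.tendsto 0
      have he : Real.sqrt (1 + 2 * c * 0 ^ 2) = 1 := by norm_num
      rwa [he] at h
    apply (hcont.comp hw).congr'
    filter_upwards [eventually_gt_atTop (0 : ℝ)] with d hd
    simp only [Function.comp_apply]
    rw [show 1 + 2 * c * (1/d)^2 = (d^2 + 2*c) / d^2 by field_simp,
      Real.sqrt_div' _ (by positivity), Real.sqrt_sq hd.le]
  -- the normalized expression and its limit
  have hNlim : Tendsto (fun d : ℝ =>
      c * ((4 - 4 * (1/d) - 2 * c * (1/d)) / (Real.sqrt (d ^ 2 + 2 * c) / d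
        + 2 * (Real.sqrt ((1 - d / 2) ^ 2 + c) / d)) + 2) /
      ((Real.sqrt ((1 - d / 2) ^ 2 + c) / d + 1/2 - 1/d) * (Real.sqrt (d ^ 2 + 2 * c) / d + 1)))
      atTop (nhds (2 * c)) := by
    have hnum : Tendsto (fun d : ℝ => (4 - 4 * (1/d) - 2 * c * (1/d)) : ℝ → ℝ) atTop
        (nhds (4 - 4 * 0 - 2 * c * 0)) :=
      (tendsto_const_nhds.sub (hw.const_mul 4)).sub (hw.const_mul (2 * c))
    have hden1 : Tendsto (fun d : ℝ => Real.sqrt (d ^ 2 + 2 * c) / d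
        + 2 * (Real.sqrt ((1 - d / 2) ^ 2 + c) / d)) atTop (nhds (1 + 2 * (1/2))) :=
      hv.add (hu.const_mul 2)
    have hfrac : Tendsto (fun d : ℝ => (4 - 4 * (1/d) - 2 * c * (1/d)) /
        (Real.sqrt (d ^ 2 + 2 * c) / d + 2 * (Real.sqrt ((1 - d / 2) ^ 2 + c) / d)) + 2) atTop
        (nhds ((4 - 4 * 0 - 2 * c * 0) / (1 + 2 * (1/2)) + 2)) :=
      (hnum.div hden1 (by norm_num)).add tendsto_const_nhds
    have hden2 : Tendsto (fun d : ℝ => (Real.sqrt ((1 - d / 2) ^ 2 + c) / d + 1/2 - 1/d)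
        * (Real.sqrt (d ^ 2 + 2 * c) / d + 1)) atTop (nhds ((1/2 + 1/2 - 0) * (1 + 1))) :=
      ((hu.add tendsto_const_nhds).sub hw).mul (hv.add tendsto_const_nhds)
    have := (hfrac.const_mul c).div hden2 (by norm_num)
    convert this using 2
    norm_num
    ring
  -- transfer via eventual equality
  apply hNlim.congr'
  filter_upwards [eventually_gt_atTop (3 : ℝ)] with d hd
  have hd0 : (0:ℝ) < d := by linarith
  set s1 := Real.sqrt ((1 - d / 2) ^ 2 + c) with hs1def
  set s2 := Real.sqrt (d ^ 2 + 2 * c) with hs2def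
  have hs1sq : s1 ^ 2 = (1 - d / 2) ^ 2 + c := Real.sq_sqrt (by positivity)
  have hs2sq : s2 ^ 2 = d ^ 2 + 2 * c := Real.sq_sqrt (by positivity)
  have hs1pos : 0 < s1 := Real.sqrt_pos.mpr (by positivity)
  have hs2pos : 0 < s2 := Real.sqrt_pos.mpr (by positivity)
  have hA : 0 < s1 + (d/2 - 1) := by linarith
  have hB : 0 < s2 + d := by linarith
  have hC2 : 0 < s2 + 2 * s1 := by linarith
  have key : (s2 - 2*s1) * (s2 + 2*s1) = 4*d - 4 - 2*c := by
    linear_combination hs2sq - 4 * hs1sq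
  have hF : F d c = c / (s1 + (d/2 - 1)) := by
    rw [eq_div_iff (ne_of_gt hA)]
    unfold F
    rw [← hs1def]
    linear_combination hs1sq
  have hG : G d c = 2 * c / (s2 + d) := by
    rw [eq_div_iff (ne_of_gt hB)]
    unfold G
    rw [← hs2def]
    linear_combination hs2sq
  rw [hF, hG]
  have hA2 : -2 + d + s1 * 2 ≠ 0 := ne_of_gt (by linarith)
  have h21 : s2 - 2 * s1 = (4*d - 4 - 2*c) / (s2 + 2*s1) := by
    rw [eq_div_iff hC2.ne']; exact key
  have step1 : d ^ 2 * (c / (s1 + (d/2 - 1)) - 2 * c / (s2 + d))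
      = c * ((s2 - 2*s1) + 2) * d ^ 2 / ((s1 + (d/2 - 1)) * (s2 + d)) := by
    rw [div_sub_div _ _ hA.ne' hB.ne', ← mul_div_assoc,
      div_eq_div_iff (mul_ne_zero hA.ne' hB.ne') (mul_ne_zero hA.ne' hB.ne')]
    ring
  have step2 : c * ((4 - 4 * (1/d) - 2 * c * (1/d)) / (s2 / d + 2 * (s1 / d)) + 2) /
      ((s1 / d + 1/2 - 1/d) * (s2 / d + 1))
      = c * ((s2 - 2*s1) + 2) * d ^ 2 / ((s1 + (d/2 - 1)) * (s2 + d)) := by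
    rw [h21]
    rw [show s2 / d + 2 * (s1 / d) = (s2 + 2*s1) / d by field_simp [hd0.ne'],
        show s1 / d + 1/2 - 1/d = (s1 + (d/2 - 1)) / d by field_simp [hd0.ne']; try ring,
        show s2 / d + 1 = (s2 + d) / d by field_simp [hd0.ne'],
        show 4 - 4 * (1/d) - 2 * c * (1/d) = (4*d - 4 - 2*c) / d by field_simp [hd0.ne']; try ring]
    rw [div_div_div_comm, div_self hd0.ne', div_one, div_mul_div_comm, div_div_eq_mul_div]
    ring
  rw [step1, step2]
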